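/- (Shcherbakov) Let (X, ℝ₊, π) be a semiflow on a metric space X, (Ω, ℝ, σ) a flow on a metric space Ω, and h : X → Ω a continuous map satisfying h(π(t, u)) = σ(t, h(u)) for all t ≥ 0 and u ∈ X. Let y ∈ Ω be Poisson stable under (Ω, ℝ, σ), i.e., y ∈ ω_y ∩ α_y. Suppose there exists a weakly regular point u₀ ∈ X with h(u₀) = y, i.e., for every sequence t_n → +∞ with σ(t_n, y) → y, the sequence {π(t_n, u₀)} has compact closure in X. Then there exists a point u ∈ X with h(u) = y such that u is Poisson stable in the positive direction under (X, ℝ₊, π), i.e., u ∈ ω_u. -/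

import Mathlib

open Filter Topology NNReal

/-- The set of limit points of `x` under the semiflow `π` along "admissible" time sequences,
i.e. sequences `τ n → ∞` of nonnegative times along which `σ (τ n) y → y`. -/
def admLimits {X Ω : Type*} [MetricSpace X] [MetricSpace Ω]
    (π : ℝ≥0 → X → X) (σ : ℝ → Ω → Ω) (y : Ω) (x : X) : Set X :=
  {v | ∃ τ : ℕ → ℝ≥0, Tendsto τ atTop atTop ∧
    Tendsto (fun n => σ ((τ n : ℝ)) y) atTop (𝓝 y) ∧
    Tendsto (fun n => π (τ n) x) atTop (𝓝 v)}

section AdmLemmas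

variable {X Ω : Type*} [MetricSpace X] [MetricSpace Ω]
    {π : ℝ≥0 → X → X} {σ : ℝ → Ω → Ω} {y : Ω}

private lemma adm_onediv : Tendsto (fun n : ℕ => 1 / ((n : ℝ) + 1)) atTop (𝓝 0) :=
  tendsto_one_div_add_atTop_nhds_zero_nat

private lemma adm_pos (n : ℕ) : (0:ℝ) < 1 / ((n:ℝ) + 1) := by positivity

/-- Transitivity of `admLimits`. -/
theorem adm_comp
    (hπcont : Continuous fun p : ℝ≥0 × X => π p.1 p.2)
    (hπadd : ∀ (t τ : ℝ≥0) (x : X), π (t + τ) x = π t (π τ x))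
    (hσcont : Continuous fun p : ℝ × Ω => σ p.1 p.2)
    (hσadd : ∀ (t τ : ℝ) (ω : Ω), σ (t + τ) ω = σ t (σ τ ω))
    {x v w : X} (hv : v ∈ admLimits π σ y x) (hw : w ∈ admLimits π σ y v) :
    w ∈ admLimits π σ y x := by
  have hπt : ∀ c : ℝ≥0, Continuous fun x' : X => π c x' := fun c =>
    hπcont.comp (continuous_const.prodMk continuous_id)
  have hσt : ∀ c : ℝ, Continuous fun ω : Ω => σ c ω := fun c =>
    hσcont.comp (continuous_const.prodMk continuous_id)
  obtain ⟨t, ht1, ht2, ht3⟩ := hv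
  obtain ⟨s, hs1, hs2, hs3⟩ := hw
  have key : ∀ j : ℕ, ∃ k : ℕ,
      dist (π (s j + t k) x) (π (s j) v) < 1 / ((j:ℝ)+1) ∧
      dist (σ (((s j + t k : ℝ≥0) : ℝ)) y) (σ ((s j : ℝ)) y) < 1 / ((j:ℝ)+1) := by
    intro j
    have c1 : Tendsto (fun k => π (s j + t k) x) atTop (𝓝 (π (s j) v)) := by
      simpa only [hπadd, Function.comp_def] using ((hπt (s j)).tendsto v).comp ht3
    have c2 : Tendsto (fun k => σ (((s j + t k : ℝ≥0)):ℝ) y) atTop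
        (𝓝 (σ ((s j:ℝ)) y)) := by
      simpa only [NNReal.coe_add, hσadd, Function.comp_def] using ((hσt ((s j:ℝ))).tendsto y).comp ht2
    exact ((Metric.tendsto_nhds.mp c1 _ (adm_pos j)).and
      (Metric.tendsto_nhds.mp c2 _ (adm_pos j))).exists
  choose k hk1 hk2 using key
  refine ⟨fun j => s j + t (k j), ?_, ?_, ?_⟩
  · exact tendsto_atTop_mono (fun j => le_self_add) hs1
  · refine hs2.congr_dist (squeeze_zero (fun _ => dist_nonneg) (fun j => ?_) adm_onediv)
    rw [dist_comm]; exact (hk2 j).le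
  · refine hs3.congr_dist (squeeze_zero (fun _ => dist_nonneg) (fun j => ?_) adm_onediv)
    rw [dist_comm]; exact (hk1 j).le

/-- From membership in `admLimits` extract a single good time. -/
theorem adm_approx {x w : X} (hw : w ∈ admLimits π σ y x) {ε : ℝ} (hε : 0 < ε) (N : ℝ≥0) :
    ∃ s : ℝ≥0, N ≤ s ∧ dist (σ ((s:ℝ)) y) y < ε ∧ dist (π s x) w < ε := by
  obtain ⟨τ, h1, h2, h3⟩ := hw
  obtain ⟨n, hn1, hn2, hn3⟩ := ((h1.eventually_ge_atTop N).and
    ((Metric.tendsto_nhds.mp h2 ε hε).and (Metric.tendsto_nhds.mp h3 ε hε))).exists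
  exact ⟨τ n, hn1, hn2, hn3⟩

theorem adm_closed (x : X) : IsClosed (admLimits π σ y x) := by
  refine isClosed_of_closure_subset ?_
  intro v hv
  obtain ⟨g, hg, hgv⟩ := mem_closure_iff_seq_limit.mp hv
  have key : ∀ i : ℕ, ∃ s : ℝ≥0, (i : ℝ≥0) ≤ s ∧
      dist (σ ((s:ℝ)) y) y < 1/((i:ℝ)+1) ∧ dist (π s x) (g i) < 1/((i:ℝ)+1) :=
    fun i => adm_approx (hg i) (adm_pos i) (i : ℝ≥0)
  choose S hS1 hS2 hS3 using key
  refine ⟨S, tendsto_atTop_mono hS1 tendsto_natCast_atTop_atTop, ?_, ?_⟩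
  · exact tendsto_iff_dist_tendsto_zero.2
      (squeeze_zero (fun _ => dist_nonneg) (fun i => (hS2 i).le) adm_onediv)
  · refine hgv.congr_dist (squeeze_zero (fun _ => dist_nonneg) (fun i => ?_) adm_onediv)
    rw [dist_comm]; exact (hS3 i).le

variable {u₀ : X}

/-- Sequential-compactness style extraction: `admLimits π σ y u₀` is compact. -/
theorem adm_isCompact
    (hreg : ∀ T : ℕ → ℝ≥0, Tendsto T atTop atTop →
      Tendsto (fun n => σ ((T n : ℝ)) y) atTop (𝓝 y) →
      IsCompact (closure (Set.range fun n => π (T n) u₀))) :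
    IsCompact (admLimits π σ y u₀) := by
  refine IsSeqCompact.isCompact ?_
  intro g hg
  have key : ∀ i : ℕ, ∃ s : ℝ≥0, (i : ℝ≥0) ≤ s ∧
      dist (σ ((s:ℝ)) y) y < 1/((i:ℝ)+1) ∧ dist (π s u₀) (g i) < 1/((i:ℝ)+1) :=
    fun i => adm_approx (hg i) (adm_pos i) (i : ℝ≥0)
  choose S hS1 hS2 hS3 using key
  have hS1' : Tendsto S atTop atTop := tendsto_atTop_mono hS1 tendsto_natCast_atTop_atTop
  have hS2' : Tendsto (fun n => σ ((S n : ℝ)) y) atTop (𝓝 y) :=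
    tendsto_iff_dist_tendsto_zero.2
      (squeeze_zero (fun _ => dist_nonneg) (fun i => (hS2 i).le) adm_onediv)
  have hmem : ∀ n, π (S n) u₀ ∈ closure (Set.range fun n => π (S n) u₀) :=
    fun n => subset_closure ⟨n, rfl⟩
  obtain ⟨a, -, φ, hφ, hconv⟩ := (hreg S hS1' hS2').tendsto_subseq hmem
  have hconv' : Tendsto (fun i => π (S (φ i)) u₀) atTop (𝓝 a) := hconv
  refine ⟨a, ⟨S ∘ φ, hS1'.comp hφ.tendsto_atTop, hS2'.comp hφ.tendsto_atTop, hconv'⟩,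
    φ, hφ, ?_⟩
  refine hconv'.congr_dist (squeeze_zero (fun _ => dist_nonneg)
    (fun i => ((hS3 (φ i)).le.trans ?_)) adm_onediv)
  have h1 : (i:ℝ) ≤ (φ i : ℝ) := Nat.cast_le.2 hφ.le_apply
  gcongr

/-- Nonemptiness of `admLimits π σ y u` for `u` in the admissible limit set of `u₀`. -/
theorem adm_nonempty
    (hπcont : Continuous fun p : ℝ≥0 × X => π p.1 p.2)
    (hπadd : ∀ (t τ : ℝ≥0) (x : X), π (t + τ) x = π t (π τ x))
    (hσcont : Continuous fun p : ℝ × Ω => σ p.1 p.2)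
    (hσadd : ∀ (t τ : ℝ) (ω : Ω), σ (t + τ) ω = σ t (σ τ ω))
    (hreg : ∀ T : ℕ → ℝ≥0, Tendsto T atTop atTop →
      Tendsto (fun n => σ ((T n : ℝ)) y) atTop (𝓝 y) →
      IsCompact (closure (Set.range fun n => π (T n) u₀)))
    {τ₀ : ℕ → ℝ≥0} (hτ₀1 : Tendsto τ₀ atTop atTop)
    (hτ₀2 : Tendsto (fun n => σ ((τ₀ n : ℝ)) y) atTop (𝓝 y))
    {u : X} (hu : u ∈ admLimits π σ y u₀) :
    (admLimits π σ y u).Nonempty := by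
  have hπt : ∀ c : ℝ≥0, Continuous fun x' : X => π c x' := fun c =>
    hπcont.comp (continuous_const.prodMk continuous_id)
  have hσt : ∀ c : ℝ, Continuous fun ω : Ω => σ c ω := fun c =>
    hσcont.comp (continuous_const.prodMk continuous_id)
  obtain ⟨t, ht1, ht2, ht3⟩ := hu
  have key : ∀ k : ℕ, ∃ s : ℝ≥0, (k:ℝ≥0) ≤ s ∧
      dist (σ ((s:ℝ)) y) y < dist (σ ((τ₀ k : ℝ)) y) y + 1/((k:ℝ)+1) ∧
      dist (π s u₀) (π (τ₀ k) u) < 1/((k:ℝ)+1) := by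
    intro k
    have c1 : Tendsto (fun j => π (τ₀ k + t j) u₀) atTop (𝓝 (π (τ₀ k) u)) := by
      simpa only [hπadd, Function.comp_def] using ((hπt (τ₀ k)).tendsto u).comp ht3
    have c2 : Tendsto (fun j => σ (((τ₀ k + t j : ℝ≥0)):ℝ) y) atTop
        (𝓝 (σ ((τ₀ k:ℝ)) y)) := by
      simpa only [NNReal.coe_add, hσadd, Function.comp_def] using ((hσt ((τ₀ k:ℝ))).tendsto y).comp ht2
    have e3 : ∀ᶠ j in atTop, (k:ℝ≥0) ≤ τ₀ k + t j := by
      filter_upwards [ht1.eventually_ge_atTop (k:ℝ≥0)] with j hj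
      exact le_trans hj le_add_self
    obtain ⟨j, hj3, hj1, hj2⟩ := (e3.and ((Metric.tendsto_nhds.mp c1 _ (adm_pos k)).and
      (Metric.tendsto_nhds.mp c2 _ (adm_pos k)))).exists
    refine ⟨τ₀ k + t j, hj3, ?_, hj1⟩
    calc dist (σ (((τ₀ k + t j : ℝ≥0)):ℝ) y) y
        ≤ dist (σ (((τ₀ k + t j : ℝ≥0)):ℝ) y) (σ ((τ₀ k:ℝ)) y)
            + dist (σ ((τ₀ k:ℝ)) y) y := dist_triangle _ _ _
      _ < dist (σ ((τ₀ k : ℝ)) y) y + 1/((k:ℝ)+1) := by linarith [hj2]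
  choose S hS1 hS2 hS3 using key
  have hS1' : Tendsto S atTop atTop := tendsto_atTop_mono hS1 tendsto_natCast_atTop_atTop
  have hS2' : Tendsto (fun n => σ ((S n : ℝ)) y) atTop (𝓝 y) := by
    rw [tendsto_iff_dist_tendsto_zero]
    refine squeeze_zero (fun _ => dist_nonneg) (fun k => (hS2 k).le) ?_
    have hb : Tendsto (fun k => dist (σ ((τ₀ k:ℝ)) y) y + 1/((k:ℝ)+1)) atTop (𝓝 (0+0)) :=
      (tendsto_iff_dist_tendsto_zero.mp hτ₀2).add adm_onediv
    simpa using hb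
  have hmem : ∀ n, π (S n) u₀ ∈ closure (Set.range fun n => π (S n) u₀) :=
    fun n => subset_closure ⟨n, rfl⟩
  obtain ⟨a, -, φ, hφ, hconv⟩ := (hreg S hS1' hS2').tendsto_subseq hmem
  have hconv' : Tendsto (fun i => π (S (φ i)) u₀) atTop (𝓝 a) := hconv
  refine ⟨a, τ₀ ∘ φ, hτ₀1.comp hφ.tendsto_atTop, hτ₀2.comp hφ.tendsto_atTop, ?_⟩
  refine hconv'.congr_dist (squeeze_zero (fun _ => dist_nonneg)
    (fun i => ((hS3 (φ i)).le.trans ?_)) adm_onediv)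
  have h1 : (i:ℝ) ≤ (φ i : ℝ) := Nat.cast_le.2 hφ.le_apply
  gcongr

end AdmLemmas

/-- Shcherbakov's theorem: let `(X, ℝ₊, π)` be a semiflow, `(Ω, ℝ, σ)` a flow, and
`h : X → Ω` a continuous equivariant map. If `y ∈ Ω` is Poisson stable and there exists
a weakly regular point `u₀ ∈ X` with `h(u₀) = y`, then there exists `u ∈ X` with
`h(u) = y` which is Poisson stable in the positive direction, i.e. `u` belongs to its own
ω-limit set. -/
theorem shcherbakov_poisson_stable {X Ω : Type*} [MetricSpace X] [MetricSpace Ω]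
    (π : ℝ≥0 → X → X)
    (hπcont : Continuous fun p : ℝ≥0 × X => π p.1 p.2)
    (hπid : ∀ x : X, π 0 x = x)
    (hπadd : ∀ (t τ : ℝ≥0) (x : X), π (t + τ) x = π t (π τ x))
    (σ : ℝ → Ω → Ω)
    (hσcont : Continuous fun p : ℝ × Ω => σ p.1 p.2)
    (hσid : ∀ ω : Ω, σ 0 ω = ω)
    (hσadd : ∀ (t τ : ℝ) (ω : Ω), σ (t + τ) ω = σ t (σ τ ω))
    (h : X → Ω) (hcont : Continuous h)
    (hhom : ∀ (t : ℝ≥0) (x : X), h (π t x) = σ (t : ℝ) (h x))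
    (y : Ω)
    (hyω : ∃ T : ℕ → ℝ, Tendsto T atTop atTop ∧
      Tendsto (fun n => σ (T n) y) atTop (𝓝 y))
    (hyα : ∃ T : ℕ → ℝ, Tendsto T atTop atBot ∧
      Tendsto (fun n => σ (T n) y) atTop (𝓝 y))
    (u₀ : X) (hu₀ : h u₀ = y)
    (hreg : ∀ T : ℕ → ℝ≥0, Tendsto T atTop atTop →
      Tendsto (fun n => σ ((T n : ℝ)) y) atTop (𝓝 y) →
      IsCompact (closure (Set.range fun n => π (T n) u₀))) :
    ∃ u : X, h u = y ∧
      ∃ T : ℕ → ℝ≥0, Tendsto T atTop atTop ∧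
        Tendsto (fun n => π (T n) u) atTop (𝓝 u) := by
  classical
  -- an admissible base sequence of return times, in `ℝ≥0`
  obtain ⟨T₀, hT₀1, hT₀2⟩ : ∃ τ : ℕ → ℝ≥0, Tendsto τ atTop atTop ∧
      Tendsto (fun n => σ ((τ n : ℝ)) y) atTop (𝓝 y) := by
    obtain ⟨T, h1, h2⟩ := hyω
    refine ⟨fun n => (T n).toNNReal, ?_, ?_⟩
    · rw [tendsto_atTop]
      intro b
      filter_upwards [h1.eventually_ge_atTop (b:ℝ)] with n hn
      calc b = Real.toNNReal (b:ℝ) := Real.toNNReal_coe.symm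
        _ ≤ (T n).toNNReal := Real.toNNReal_mono hn
    · refine Tendsto.congr' ?_ h2
      filter_upwards [h1.eventually_ge_atTop (0:ℝ)] with n hn
      rw [Real.coe_toNNReal _ hn]
  -- the compact set `G = admLimits π σ y u₀`
  have hGne : (admLimits π σ y u₀).Nonempty := by
    have hmem : ∀ n, π (T₀ n) u₀ ∈ closure (Set.range fun n => π (T₀ n) u₀) :=
      fun n => subset_closure ⟨n, rfl⟩
    obtain ⟨a, -, φ, hφ, hconv⟩ := (hreg T₀ hT₀1 hT₀2).tendsto_subseq hmem
    exact ⟨a, T₀ ∘ φ, hT₀1.comp hφ.tendsto_atTop, hT₀2.comp hφ.tendsto_atTop, hconv⟩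
  have hGcpt : IsCompact (admLimits π σ y u₀) := adm_isCompact hreg
  -- the family of candidate sets, and a minimal element by Zorn's lemma
  set F : Set (Set X) := {M | M.Nonempty ∧ IsClosed M ∧ M ⊆ admLimits π σ y u₀ ∧
    ∀ u ∈ M, admLimits π σ y u ⊆ M} with hF
  have hGF : admLimits π σ y u₀ ∈ F :=
    ⟨hGne, adm_closed u₀, subset_rfl,
      fun u hu v hv => adm_comp hπcont hπadd hσcont hσadd hu hv⟩
  have hchainlb : ∀ c ⊆ F, IsChain (· ⊆ ·) c → c.Nonempty →
      ∃ lb ∈ F, ∀ s ∈ c, lb ⊆ s := by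
    intro c hcF hchain hcne
    have hccpt : ∀ M ∈ c, IsCompact M := fun M hM =>
      hGcpt.of_isClosed_subset (hcF hM).2.1 (hcF hM).2.2.1
    have : Nonempty c := hcne.to_subtype
    have hne : (⋂₀ c).Nonempty := by
      refine IsCompact.nonempty_sInter_of_directed_nonempty_isCompact_isClosed ?_
        (fun M hM => (hcF hM).1) hccpt (fun M hM => (hcF hM).2.1)
      intro M hM N hN
      rcases hchain.total hM hN with hs | hs
      · exact ⟨M, hM, Set.Subset.rfl, hs⟩
      · exact ⟨N, hN, hs, Set.Subset.rfl⟩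
    refine ⟨⋂₀ c, ⟨hne, isClosed_sInter fun M hM => (hcF hM).2.1, ?_, ?_⟩,
      fun s hs => Set.sInter_subset_of_mem hs⟩
    · obtain ⟨M₀, hM₀⟩ := hcne
      exact (Set.sInter_subset_of_mem hM₀).trans (hcF hM₀).2.2.1
    · intro u hu
      intro v hv
      rw [Set.mem_sInter] at hu ⊢
      exact fun M hM => (hcF hM).2.2.2 u (hu M hM) hv
  obtain ⟨M, -, hMF, hMmin⟩ := zorn_superset_nonempty F hchainlb _ hGF
  obtain ⟨hMne, hMcl, hMG, hMinv⟩ := hMF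
  obtain ⟨u, hu⟩ := hMne
  have huG : u ∈ admLimits π σ y u₀ := hMG hu
  have hLuM : admLimits π σ y u ⊆ M := hMinv u hu
  have hLuF : admLimits π σ y u ∈ F :=
    ⟨adm_nonempty hπcont hπadd hσcont hσadd hreg hT₀1 hT₀2 huG, adm_closed u,
      hLuM.trans hMG, fun v hv w hw => adm_comp hπcont hπadd hσcont hσadd hv hw⟩
  have hEq : admLimits π σ y u = M := le_antisymm hLuM (hMmin hLuF hLuM)
  have huLu : u ∈ admLimits π σ y u := hEq ▸ hu
  obtain ⟨τ, hτ1, hτ2, hτ3⟩ := huLu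
  refine ⟨u, ?_, τ, hτ1, hτ3⟩
  -- `h u = y`
  obtain ⟨t, ht1, ht2, ht3⟩ := huG
  have hhu : Tendsto (fun n => h (π (t n) u₀)) atTop (𝓝 (h u)) :=
    (hcont.tendsto u).comp ht3
  simp only [hhom, hu₀] at hhu
  exact tendsto_nhds_unique hhu ht2
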